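/- Let W be an edge-disjoint set of open wedges of G and let E_W be the set of edges contained in some wedge of W. Let C be a clique partition of G, let m_W be the number of edges of E_W crossing C and let m_S be the number of edges of E ∖ E_W crossing C. If m_S ≤ 2·(|E_W| − m_W), then the cost of C satisfies m_W + m_S ≤ 3·|W| ≤ 3·OPT_CD(G). -/

import Mathlib

open scoped Classical

namespace CD

variable {V : Type*}

/-- An open wedge, encoded as a pair `(p, k)` where `p = s(i,j)` is the unordered pair of
endpoint vertices and `k` is the center: `{i,k}` and `{j,k}` are edges and `{i,j}` is not.
Using an unordered pair identifies the wedges `(i,j,k)` and `(j,i,k)`. -/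
def IsOpenWedge (G : SimpleGraph V) (w : Sym2 V × V) : Prop :=
  ∃ i j : V, w.1 = s(i, j) ∧ i ≠ j ∧ G.Adj i w.2 ∧ G.Adj j w.2 ∧ ¬ G.Adj i j

/-- The two edges of a wedge `(s(i,j), k)`, namely `s(i,k)` and `s(j,k)`. -/
def wedgeEdges (w : Sym2 V × V) : Set (Sym2 V) :=
  {e | ∃ x ∈ w.1, e = s(x, w.2)}

/-- The set of open wedges of `G`. -/
def wedgeSet (G : SimpleGraph V) : Set (Sym2 V × V) := {w | IsOpenWedge G w}

/-- `E_W ⊆ E` is an STC labeling if every open wedge has one of its two edges in `E_W`. -/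
def IsSTCLabeling (G : SimpleGraph V) (EW : Set (Sym2 V)) : Prop :=
  EW ⊆ G.edgeSet ∧
  ∀ i j k : V, i ≠ j → G.Adj i k → G.Adj j k → ¬ G.Adj i j →
    s(i, k) ∈ EW ∨ s(j, k) ∈ EW

/-- Minimum size of an STC labeling of `G`. -/
noncomputable def MinSTC (G : SimpleGraph V) : ℕ :=
  sInf {c | ∃ EW : Set (Sym2 V), IsSTCLabeling G EW ∧ EW.ncard = c}

variable [Fintype V] [DecidableEq V]

/-- A clique partition: a partition of the vertex set all of whose parts are cliques in `G`. -/
def IsCliquePartition (G : SimpleGraph V) (C : Finpartition (Finset.univ : Finset V)) : Prop :=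
  ∀ P ∈ C.parts, G.IsClique (P : Set V)

/-- An edge crosses the partition iff no part contains both of its endpoints
(equivalently, its endpoints lie in different parts). -/
def Crosses (C : Finpartition (Finset.univ : Finset V)) (e : Sym2 V) : Prop :=
  ¬ ∃ P ∈ C.parts, ∀ x ∈ e, x ∈ P

/-- The cost of a partition: the number of edges of `G` crossing it. -/
noncomputable def cost (G : SimpleGraph V) (C : Finpartition (Finset.univ : Finset V)) : ℕ :=
  {e | e ∈ G.edgeSet ∧ Crosses C e}.ncard

/-- Optimal cluster deletion value: the minimum cost of a clique partition of `G`. -/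
noncomputable def OPTCD (G : SimpleGraph V) : ℕ :=
  sInf {c | ∃ C : Finpartition (Finset.univ : Finset V), IsCliquePartition G C ∧ cost G C = c}

/-- `B_k(G)`: edges `{i,j} ∈ E` with `i, j ≠ k`, `{i,k} ∈ E` and `{j,k} ∉ E`. -/
def Bset (G : SimpleGraph V) (k : V) : Set (Sym2 V) :=
  {e | ∃ i j : V, e = s(i, j) ∧ G.Adj i j ∧ j ≠ k ∧ G.Adj i k ∧ ¬ G.Adj j k}

/-- `N_k(G)`: unordered pairs `{i,j}` of distinct vertices with `{i,k}, {j,k} ∈ E`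
and `{i,j} ∉ E`. -/
def Nset (G : SimpleGraph V) (k : V) : Set (Sym2 V) :=
  {e | ∃ i j : V, e = s(i, j) ∧ i ≠ j ∧ ¬ G.Adj i j ∧ G.Adj i k ∧ G.Adj j k}

/-- Feasibility for the STC LP relaxation: variables are nonnegative on edges and for every
open wedge `(i,j,k)` centered at `k` we have `x_{ik} + x_{jk} ≥ 1`. -/
def LPFeasible (G : SimpleGraph V) (x : Sym2 V → ℚ) : Prop :=
  (∀ e ∈ G.edgeSet, 0 ≤ x e) ∧
  ∀ i j k : V, i ≠ j → G.Adj i k → G.Adj j k → ¬ G.Adj i j →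
    1 ≤ x s(i, k) + x s(j, k)

/-- A solution is half-integral if every edge variable lies in `{0, 1/2, 1}`. -/
def HalfIntegral (G : SimpleGraph V) (x : Sym2 V → ℚ) : Prop :=
  ∀ e ∈ G.edgeSet, x e = 0 ∨ x e = 1 / 2 ∨ x e = 1

/-- Feasibility for the program (IP2): binary variables `y_e, z_e` on edges, and for every
open wedge `(i,j,k)` centered at `k`, `z_{ik} ≤ y_{jk}` and `z_{jk} ≤ y_{ik}`. -/
def IP2Feasible (G : SimpleGraph V) (y z : Sym2 V → ℚ) : Prop :=
  (∀ e ∈ G.edgeSet, (y e = 0 ∨ y e = 1) ∧ (z e = 0 ∨ z e = 1)) ∧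
  ∀ i j k : V, i ≠ j → G.Adj i k → G.Adj j k → ¬ G.Adj i j →
    z s(i, k) ≤ y s(j, k) ∧ z s(j, k) ≤ y s(i, k)

lemma aux_ncard_biUnion_le {α β : Type*} {s : Set α} (hs : s.Finite) (f : α → Set β)
    (hf : ∀ a, (f a).Finite) (k : ℕ) (h : ∀ a ∈ s, (f a).ncard ≤ k) :
    (⋃ a ∈ s, f a).ncard ≤ k * s.ncard := by
  refine Set.Finite.induction_on
    (motive := fun s _ => (∀ a ∈ s, (f a).ncard ≤ k) → (⋃ a ∈ s, f a).ncard ≤ k * s.ncard)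
    s hs ?_ ?_ h
  · simp
  · intro a s ha hs ih h
    have : (⋃ x ∈ insert a s, f x) = f a ∪ ⋃ x ∈ s, f x := by
      simp [Set.biUnion_insert]
    rw [this, Set.ncard_insert_of_notMem ha hs, Nat.mul_add, Nat.mul_one]
    calc (f a ∪ ⋃ x ∈ s, f x).ncard ≤ (f a).ncard + (⋃ x ∈ s, f x).ncard :=
          Set.ncard_union_le _ _
      _ ≤ k + k * s.ncard :=
          Nat.add_le_add (h a (Set.mem_insert _ _))
            (ih (fun x hx => h x (Set.mem_insert_of_mem _ hx)))
      _ = k * s.ncard + k := by ring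

lemma aux_cross {G : SimpleGraph V} [Fintype V] [DecidableEq V]
    {C : Finpartition (Finset.univ : Finset V)} (hC : IsCliquePartition G C)
    {w : Sym2 V × V} (hw : IsOpenWedge G w) :
    ∃ e, e ∈ wedgeEdges w ∧ e ∈ G.edgeSet ∧ Crosses C e := by
  obtain ⟨i, j, h1, hij, hik, hjk, hnadj⟩ := hw
  have hiw : s(i, w.2) ∈ wedgeEdges w := ⟨i, by rw [h1]; simp, rfl⟩
  have hjw : s(j, w.2) ∈ wedgeEdges w := ⟨j, by rw [h1]; simp, rfl⟩
  by_cases hc1 : Crosses C s(i, w.2)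
  · exact ⟨s(i, w.2), hiw, hik, hc1⟩
  by_cases hc2 : Crosses C s(j, w.2)
  · exact ⟨s(j, w.2), hjw, hjk, hc2⟩
  exfalso
  rw [Crosses, not_not] at hc1 hc2
  obtain ⟨P, hP, hPmem⟩ := hc1
  obtain ⟨Q, hQ, hQmem⟩ := hc2
  have hiP : i ∈ P := hPmem i (by simp)
  have hkP : w.2 ∈ P := hPmem w.2 (by simp)
  have hjQ : j ∈ Q := hQmem j (by simp)
  have hkQ : w.2 ∈ Q := hQmem w.2 (by simp)
  have hPQ : P = Q := C.eq_of_mem_parts hP hQ hkP hkQ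
  exact hnadj (hC P hP hiP (hPQ ▸ hjQ) hij)

lemma aux_lb {G : SimpleGraph V} [Fintype V] [DecidableEq V]
    {W : Set (Sym2 V × V)} (hW : ∀ w ∈ W, IsOpenWedge G w)
    (hdisj : W.Pairwise fun w₁ w₂ => Disjoint (wedgeEdges w₁) (wedgeEdges w₂))
    {C : Finpartition (Finset.univ : Finset V)} (hC : IsCliquePartition G C) :
    W.ncard ≤ {e | e ∈ (⋃ w ∈ W, wedgeEdges w) ∧ e ∈ G.edgeSet ∧ Crosses C e}.ncard := by
  classical
  set f : Sym2 V × V → Sym2 V := fun w =>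
    if h : ∃ e, e ∈ wedgeEdges w ∧ e ∈ G.edgeSet ∧ Crosses C e then h.choose else w.1 with hf
  have hfw : ∀ w ∈ W, f w ∈ wedgeEdges w ∧ f w ∈ G.edgeSet ∧ Crosses C (f w) := by
    intro w hw
    have h : ∃ e, e ∈ wedgeEdges w ∧ e ∈ G.edgeSet ∧ Crosses C e := aux_cross hC (hW w hw)
    simp only [hf, dif_pos h]
    exact h.choose_spec
  apply Set.ncard_le_ncard_of_injOn f
  · intro w hw
    obtain ⟨h1, h2, h3⟩ := hfw w hw
    exact ⟨Set.mem_biUnion hw h1, h2, h3⟩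
  · intro w₁ h₁ w₂ h₂ heq
    by_contra hne
    exact (hdisj h₁ h₂ hne).ne_of_mem (hfw w₁ h₁).1 (hfw w₂ h₂).1 heq

lemma aux_bot_clique (G : SimpleGraph V) [Fintype V] [DecidableEq V] :
    IsCliquePartition G (⊥ : Finpartition (Finset.univ : Finset V)) := by
  intro P hP
  rw [Finpartition.mem_bot_iff] at hP
  obtain ⟨a, _, rfl⟩ := hP
  simp [SimpleGraph.IsClique]

theorem statement_7 (G : SimpleGraph V) (W : Set (Sym2 V × V))
    (hW : ∀ w ∈ W, IsOpenWedge G w)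
    (hdisj : W.Pairwise fun w₁ w₂ => Disjoint (wedgeEdges w₁) (wedgeEdges w₂))
    (EW : Set (Sym2 V)) (hEWdef : EW = ⋃ w ∈ W, wedgeEdges w)
    (C : Finpartition (Finset.univ : Finset V)) (hC : IsCliquePartition G C)
    (mW mS : ℕ)
    (hmW : mW = {e | e ∈ EW ∧ Crosses C e}.ncard)
    (hmS : mS = {e | e ∈ G.edgeSet \ EW ∧ Crosses C e}.ncard)
    (hyp : mS ≤ 2 * (EW.ncard - mW)) :
    mW + mS ≤ 3 * W.ncard ∧ 3 * W.ncard ≤ 3 * OPTCD G := by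
  have hlb := aux_lb hW hdisj hC
  -- W.ncard ≤ mW
  have h1 : W.ncard ≤ mW := by
    rw [hmW]
    refine hlb.trans (Set.ncard_le_ncard ?_ (Set.toFinite _))
    rintro e ⟨he1, _, he3⟩
    exact ⟨hEWdef ▸ he1, he3⟩
  -- mW ≤ EW.ncard
  have h2 : mW ≤ EW.ncard := by
    rw [hmW]
    exact Set.ncard_le_ncard (fun e he => he.1) (Set.toFinite _)
  -- EW.ncard ≤ 2 * W.ncard
  have h3 : EW.ncard ≤ 2 * W.ncard := by
    rw [hEWdef]
    refine aux_ncard_biUnion_le (Set.toFinite _) _ (fun _ => Set.toFinite _) 2 ?_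
    intro w hw
    obtain ⟨i, j, hw1, hij, _, _, _⟩ := hW w hw
    have : wedgeEdges w ⊆ {s(i, w.2), s(j, w.2)} := by
      rintro e ⟨x, hx, rfl⟩
      rw [hw1, Sym2.mem_iff] at hx
      rcases hx with rfl | rfl
      · exact Set.mem_insert _ _
      · exact Set.mem_insert_of_mem _ rfl
    calc (wedgeEdges w).ncard ≤ ({s(i, w.2), s(j, w.2)} : Set (Sym2 V)).ncard :=
          Set.ncard_le_ncard this (Set.toFinite _)
      _ ≤ 2 := by
          refine (Set.ncard_insert_le _ _).trans ?_
          simp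
  -- W.ncard ≤ OPTCD G
  have h4 : W.ncard ≤ OPTCD G := by
    refine le_csInf ⟨_, ⊥, aux_bot_clique G, rfl⟩ ?_
    rintro c ⟨C', hC', rfl⟩
    refine (aux_lb hW hdisj hC').trans (Set.ncard_le_ncard ?_ (Set.toFinite _))
    rintro e ⟨_, he2, he3⟩
    exact ⟨he2, he3⟩
  omega

end CD
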